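/- Let 0 < ε < π/2, let k ≥ 1, and let θ₁ > θ₂ > … > θ_k be reals with θ₁ − θ_k ≤ ε. Place v₀ at the origin of ℝ² and v_i = (cos θ_i, sin θ_i) for 1 ≤ i ≤ k. Then this straight-line drawing of the triangular fan with vertices v₀, v₁, …, v_k and edges v₀v_i (1 ≤ i ≤ k) and v_iv_{i+1} (1 ≤ i < k) is an increasing-chord drawing: for every two vertices there is a path in the fan whose image polyline has increasing chords. -/

import Mathlib

open Real EuclideanGeometry
open scoped RealInnerProductSpace

noncomputable section

abbrev Pt : Type := EuclideanSpace ℝ (Fin 2)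

/-- Vertex characterization of self-approaching polylines. -/
def SelfApproachingPts (n : ℕ) (v : ℕ → Pt) : Prop :=
  ∀ i j : ℕ, i < j → j < n → 0 ≤ ⟪v (i + 1) - v i, v j - v (i + 1)⟫

def IncreasingChordsPts (n : ℕ) (v : ℕ → Pt) : Prop :=
  SelfApproachingPts n v ∧ SelfApproachingPts n (fun i => v (n - 1 - i))

def IncreasingChordsList (l : List Pt) : Prop :=
  IncreasingChordsPts l.length (fun i => l.getD i 0)

def IsIncreasingChordDrawing {V : Type*} (G : SimpleGraph V) (f : V → Pt) : Prop :=
  Function.Injective f ∧ ∀ s t : V, s ≠ t →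
    ∃ w : G.Walk s t, w.IsPath ∧ IncreasingChordsList (w.support.map f)

/-- The triangular fan graph on vertices `0, 1, …, k` with root `0`:
edges `0 - i` for `1 ≤ i ≤ k` and `i - (i+1)` for `1 ≤ i < k`. -/
def fanGraph (k : ℕ) : SimpleGraph (Fin (k + 1)) :=
  SimpleGraph.fromRel (fun i j => (i = 0 ∧ j ≠ 0) ∨ (i ≠ 0 ∧ (i : ℕ) + 1 = (j : ℕ)))

/-! ### Auxiliary geometric lemmas -/

def uPt (θ : ℝ) : Pt :=
  EuclideanSpace.single (0 : Fin 2) (Real.cos θ) + EuclideanSpace.single (1 : Fin 2) (Real.sin θ)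

lemma inner_uPt (α β : ℝ) : ⟪uPt α, uPt β⟫ = Real.cos (α - β) := by
  simp [uPt, inner_add_left, inner_add_right, EuclideanSpace.inner_single_left,
    EuclideanSpace.inner_single_right, EuclideanSpace.single_apply, Real.cos_sub]
  ring

lemma inner_expr (α β γ : ℝ) :
    ⟪uPt β - uPt α, uPt γ - uPt β⟫ =
      Real.cos (α - β) + Real.cos (β - γ) - Real.cos (α - γ) - 1 := by
  rw [inner_sub_left, inner_sub_right, inner_sub_right]
  rw [inner_uPt, inner_uPt, inner_uPt, inner_uPt]
  rw [show α - β = -(β - α) by ring, Real.cos_neg, sub_self, Real.cos_zero]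
  ring

lemma num_key (a b : ℝ) (ha : 0 ≤ a) (hb : 0 ≤ b) (h : a + b < π / 2) :
    0 ≤ Real.cos a + Real.cos b - Real.cos (a + b) - 1 := by
  have hpi := Real.pi_pos
  have h1 : Real.cos b - Real.cos (a + b) = 2 * Real.sin (a/2 + b) * Real.sin (a/2) := by
    rw [Real.cos_sub_cos, show (b + (a+b))/2 = a/2 + b by ring,
      show (b - (a+b))/2 = -(a/2) by ring, Real.sin_neg]; ring
  have h2 : Real.cos a = 1 - 2 * Real.sin (a/2) ^ 2 := by
    have : Real.cos a = Real.cos (a/2)^2 - Real.sin (a/2)^2 := by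
      rw [show a = a/2 + a/2 by ring, Real.cos_add]; ring
    nlinarith [Real.sin_sq_add_cos_sq (a/2)]
  have hs1 : 0 ≤ Real.sin (a/2) := Real.sin_nonneg_of_nonneg_of_le_pi (by linarith)
    (by linarith)
  have hs2 : Real.sin (a/2) ≤ Real.sin (a/2 + b) := by
    apply Real.sin_le_sin_of_le_of_le_pi_div_two (by linarith) (by linarith) (by linarith)
  nlinarith

lemma key_anti (α β γ : ℝ) (h1 : β ≤ α) (h2 : γ ≤ β) (h : α - γ < π / 2) :
    0 ≤ ⟪uPt β - uPt α, uPt γ - uPt β⟫ := by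
  rw [inner_expr]
  have := num_key (α - β) (β - γ) (by linarith) (by linarith) (by linarith)
  rw [show α - β + (β - γ) = α - γ by ring] at this
  linarith

lemma key_mono (α β γ : ℝ) (h1 : α ≤ β) (h2 : β ≤ γ) (h : γ - α < π / 2) :
    0 ≤ ⟪uPt β - uPt α, uPt γ - uPt β⟫ := by
  rw [inner_expr]
  have := num_key (β - α) (γ - β) (by linarith) (by linarith) (by linarith)
  rw [show β - α + (γ - β) = γ - α by ring] at this
  rw [show α - β = -(β - α) by ring, show β - γ = -(γ - β) by ring,
    show α - γ = -(γ - α) by ring, Real.cos_neg, Real.cos_neg, Real.cos_neg]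
  linarith

/-! ### Lists of points on a monotone circular arc -/

lemma SA_two (v : ℕ → Pt) : SelfApproachingPts 2 v := by
  intro i j hij hj2
  have : i = 0 ∧ j = 1 := by omega
  obtain ⟨rfl, rfl⟩ := this
  simp

lemma IC_two (l : List Pt) (h : l.length = 2) : IncreasingChordsList l := by
  unfold IncreasingChordsList IncreasingChordsPts
  rw [h]
  exact ⟨SA_two _, SA_two _⟩

lemma getD_range_map (N : ℕ) (φ : ℕ → Pt) (m : ℕ) (hm : m < N) :
    ((List.range N).map φ).getD m 0 = φ m := by
  rw [List.getD_eq_getElem?_getD]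
  rw [List.getElem?_eq_getElem (by simpa using hm)]
  simp

lemma IC_arc (N : ℕ) (g : ℕ → ℝ)
    (hg : ∀ a b : ℕ, a ≤ b → b < N → g b ≤ g a)
    (hsp : ∀ a b : ℕ, a < N → b < N → g a - g b < π / 2) :
    IncreasingChordsList ((List.range N).map (fun m => uPt (g m))) := by
  have hlen : ((List.range N).map (fun m => uPt (g m))).length = N := by simp
  unfold IncreasingChordsList
  rw [hlen]
  constructor
  · intro i j hij hjN
    simp only
    rw [getD_range_map N _ (i+1) (by omega), getD_range_map N _ i (by omega),
      getD_range_map N _ j hjN]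
    exact key_anti (g i) (g (i+1)) (g j) (hg i (i+1) (by omega) (by omega))
      (hg (i+1) j (by omega) hjN) (hsp i j (by omega) hjN)
  · intro i j hij hjN
    simp only
    rw [getD_range_map N _ (N-1-(i+1)) (by omega), getD_range_map N _ (N-1-i) (by omega),
      getD_range_map N _ (N-1-j) (by omega)]
    exact key_mono (g (N-1-i)) (g (N-1-(i+1))) (g (N-1-j))
      (hg (N-1-(i+1)) (N-1-i) (by omega) (by omega))
      (hg (N-1-j) (N-1-(i+1)) (by omega) (by omega))
      (hsp (N-1-j) (N-1-i) (by omega) (by omega))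

/-! ### The fan graph: adjacency and rim walks -/

lemma fan_adj_zero (k m : ℕ) (h1 : 1 ≤ m) (h2 : m ≤ k) :
    (fanGraph k).Adj 0 ⟨m, by omega⟩ := by
  have hne : (0 : Fin (k+1)) ≠ ⟨m, by omega⟩ := by
    simp only [Ne, Fin.ext_iff, Fin.val_zero]; omega
  exact ⟨hne, Or.inl (Or.inl ⟨rfl, hne.symm⟩)⟩

lemma fan_adj_succ (k m : ℕ) (h1 : 1 ≤ m) (h2 : m + 1 ≤ k) :
    (fanGraph k).Adj ⟨m, by omega⟩ ⟨m + 1, by omega⟩ := by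
  have hne : (⟨m, by omega⟩ : Fin (k+1)) ≠ ⟨m + 1, by omega⟩ := by
    simp only [Ne, Fin.ext_iff]; omega
  have hne0 : (⟨m, by omega⟩ : Fin (k+1)) ≠ 0 := by
    simp only [Ne, Fin.ext_iff, Fin.val_zero]; omega
  exact ⟨hne, Or.inl (Or.inr ⟨hne0, rfl⟩)⟩

/-- The vertex of the fan with index `min m k`. -/
def vtx (k m : ℕ) : Fin (k + 1) := ⟨min m k, by omega⟩

lemma vtx_eq (k m : ℕ) (h : m ≤ k) : vtx k m = ⟨m, by omega⟩ := by
  simp [vtx, Nat.min_eq_left h]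

def rimWalk (k i : ℕ) (hi : 1 ≤ i) : ∀ (d : ℕ) (_ : i + d ≤ k),
    (fanGraph k).Walk (vtx k i) (vtx k (i + d))
  | 0, _ => SimpleGraph.Walk.nil
  | d + 1, h => by
    refine ((rimWalk k i hi d (by omega)).concat ?_)
    show (fanGraph k).Adj (vtx k (i+d)) (vtx k (i+d+1))
    rw [vtx_eq k (i+d) (by omega), vtx_eq k (i+d+1) (by omega)]
    exact fan_adj_succ k (i + d) (by omega) (by omega)

lemma rimWalk_support (k i : ℕ) (hi : 1 ≤ i) (d : ℕ) (h : i + d ≤ k) :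
    (rimWalk k i hi d h).support = (List.range (d + 1)).map (fun m => vtx k (i + m)) := by
  induction d with
  | zero => simp [rimWalk, List.range_succ]
  | succ d ih =>
    rw [rimWalk]
    rw [SimpleGraph.Walk.support_concat, ih (by omega)]
    simp [List.range_succ]

lemma rimWalk_isPath (k i : ℕ) (hi : 1 ≤ i) (d : ℕ) (h : i + d ≤ k) :
    (rimWalk k i hi d h).IsPath := by
  rw [SimpleGraph.Walk.isPath_def, rimWalk_support]
  apply List.Nodup.map_on
  · intro x hx y hy hxy
    rw [List.mem_range] at hx hy
    have hx' : i + x ≤ k := by omega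
    have hy' : i + y ≤ k := by omega
    rw [vtx_eq k _ hx', vtx_eq k _ hy', Fin.mk.injEq] at hxy
    omega
  · exact List.nodup_range

/-! ### Reversal of increasing-chord lists -/

lemma SA_congr {n : ℕ} {v w : ℕ → Pt} (h : ∀ m, m < n → v m = w m)
    (hv : SelfApproachingPts n v) : SelfApproachingPts n w := by
  intro i j hij hjn
  rw [← h (i+1) (by omega), ← h i (by omega), ← h j hjn]
  exact hv i j hij hjn

lemma IC_reverse {l : List Pt} (h : IncreasingChordsList l) :
    IncreasingChordsList l.reverse := by
  obtain ⟨h1, h2⟩ := h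
  have hlen : l.reverse.length = l.length := by simp
  have hget : ∀ m, m < l.length → l.reverse.getD m 0 = l.getD (l.length - 1 - m) 0 := by
    intro m hm
    rw [List.getD_eq_getElem?_getD, List.getD_eq_getElem?_getD]
    rw [List.getElem?_eq_getElem (by simpa using hm),
      List.getElem?_eq_getElem (by omega)]
    simp [List.getElem_reverse]
  constructor
  · rw [hlen]
    apply SA_congr (v := fun i => l.getD (l.length - 1 - i) 0)
    · intro m hm; exact (hget m hm).symm
    · exact h2
  · rw [hlen]
    apply SA_congr (v := fun i => l.getD i 0)
    · intro m hm
      show l.getD m 0 = l.reverse.getD (l.length - 1 - m) 0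
      rw [hget (l.length - 1 - m) (by omega)]
      congr 1
      omega
    · exact h1

/-! ### Main theorem -/

theorem stmt5 (ε : ℝ) (hε0 : 0 < ε) (hε : ε < π / 2) (k : ℕ) (hk : 1 ≤ k)
    (θ : Fin (k + 1) → ℝ)
    (hmono : ∀ i j : Fin (k + 1), (0 : Fin (k + 1)) < i → i < j → θ j < θ i)
    (hspread : θ ⟨1, by omega⟩ - θ ⟨k, by omega⟩ ≤ ε)
    (f : Fin (k + 1) → Pt)
    (hf0 : f 0 = 0)
    (hfi : ∀ i : Fin (k + 1), i ≠ 0 →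
      f i = EuclideanSpace.single (0 : Fin 2) (Real.cos (θ i)) +
            EuclideanSpace.single (1 : Fin 2) (Real.sin (θ i))) :
    IsIncreasingChordDrawing (fanGraph k) f := by
  have hpi := Real.pi_pos
  -- f of a nonzero vertex is uPt of its angle
  have hfu : ∀ i : Fin (k + 1), i ≠ 0 → f i = uPt (θ i) := by
    intro i hi; rw [hfi i hi]; rfl
  -- basic angle comparison: anti-monotone (non-strict) on nonzero vertices
  have hanti : ∀ i j : Fin (k + 1), 0 < (i:ℕ) → (i:ℕ) ≤ (j:ℕ) → θ j ≤ θ i := by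
    intro i j hi hij
    rcases Nat.eq_or_lt_of_le hij with heq | hlt
    · rw [Fin.ext_iff.mpr heq]
    · exact le_of_lt (hmono i j (by rw [Fin.lt_def]; simpa using hi) (by rw [Fin.lt_def]; omega))
  -- spread bound for any two nonzero vertices
  have hsp : ∀ i j : Fin (k + 1), 0 < (i:ℕ) → 0 < (j:ℕ) → θ i - θ j < π / 2 := by
    intro i j hi hj
    have h1 : θ i ≤ θ ⟨1, by omega⟩ := hanti ⟨1, by omega⟩ i (by norm_num)
      (by show 1 ≤ (i:ℕ); omega)
    have h2 : θ ⟨k, by omega⟩ ≤ θ j := hanti j ⟨k, by omega⟩ hj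
      (by show (j:ℕ) ≤ k; have := j.isLt; omega)
    linarith
  constructor
  · -- injectivity
    intro a b hab
    by_contra hne
    have hval : ∀ i : Fin (k+1), i ≠ 0 → (f i) 0 = Real.cos (θ i) ∧ (f i) 1 = Real.sin (θ i) := by
      intro i hi
      rw [hfi i hi]
      constructor <;> simp [EuclideanSpace.single_apply]
    have hfne0 : ∀ i : Fin (k+1), i ≠ 0 → f i ≠ 0 := by
      intro i hi hcontra
      obtain ⟨hc, hs⟩ := hval i hi
      rw [hcontra] at hc hs
      have := Real.sin_sq_add_cos_sq (θ i)
      simp at hc hs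
      rw [← hc, ← hs] at this
      norm_num at this
    rcases eq_or_ne a 0 with rfl | ha0
    · rcases eq_or_ne b 0 with rfl | hb0
      · exact hne rfl
      · exact hfne0 b hb0 (by rw [← hab]; exact hf0)
    · rcases eq_or_ne b 0 with rfl | hb0
      · exact hfne0 a ha0 (by rw [hab]; exact hf0)
      · -- both nonzero
        obtain ⟨hca, hsa⟩ := hval a ha0
        obtain ⟨hcb, hsb⟩ := hval b hb0
        rw [hab] at hca hsa
        have e0 : Real.cos (θ a) = Real.cos (θ b) := by rw [← hca, hcb]
        have e1 : Real.sin (θ a) = Real.sin (θ b) := by rw [← hsa, hsb]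
        have hcos : Real.cos (θ a - θ b) = 1 := by
          rw [Real.cos_sub, e0, e1]
          nlinarith [Real.sin_sq_add_cos_sq (θ b)]
        have ha' : 0 < (a:ℕ) := Nat.pos_of_ne_zero (fun h => ha0 (Fin.ext (by simp [h])))
        have hb' : 0 < (b:ℕ) := Nat.pos_of_ne_zero (fun h => hb0 (Fin.ext (by simp [h])))
        have hab1 : θ a - θ b < π / 2 := hsp a b ha' hb'
        have hab2 : θ b - θ a < π / 2 := hsp b a hb' ha'
        have : θ a - θ b = 0 := by
          rw [Real.cos_eq_one_iff_of_lt_of_lt (by linarith) (by linarith)] at hcos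
          exact hcos
        have hθ : θ a = θ b := by linarith
        rcases Nat.lt_or_ge (a:ℕ) (b:ℕ) with h | h
        · have := hmono a b (by rw [Fin.lt_def]; simpa using ha') (by rw [Fin.lt_def]; omega)
          linarith
        · have hne' : (b:ℕ) < (a:ℕ) := by
            rcases Nat.eq_or_lt_of_le h with heq | hlt
            · exact absurd (Fin.ext heq.symm) hne
            · exact hlt
          have := hmono b a (by rw [Fin.lt_def]; simpa using hb') (by rw [Fin.lt_def]; omega)
          linarith
  · -- paths
    intro s t hst
    rcases eq_or_ne s 0 with rfl | hs0
    · -- s = 0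
      have ht : 0 < (t:ℕ) := Nat.pos_of_ne_zero (fun h => hst (Fin.ext (by simp [h])))
      have ht' : (t:ℕ) ≤ k := by have := t.isLt; omega
      have hadj : (fanGraph k).Adj 0 t := by
        have := fan_adj_zero k (t:ℕ) ht ht'
        rwa [show (⟨(t:ℕ), by omega⟩ : Fin (k+1)) = t from Fin.ext rfl] at this
      refine ⟨SimpleGraph.Walk.cons hadj SimpleGraph.Walk.nil, ?_, ?_⟩
      · simp [SimpleGraph.Walk.isPath_def, hst]
      · apply IC_two; simp
    · rcases eq_or_ne t 0 with rfl | ht0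
      · have hs : 0 < (s:ℕ) := Nat.pos_of_ne_zero (fun h => hs0 (Fin.ext (by simp [h])))
        have hs' : (s:ℕ) ≤ k := by have := s.isLt; omega
        have hadj : (fanGraph k).Adj s 0 := by
          have := (fan_adj_zero k (s:ℕ) hs hs').symm
          rwa [show (⟨(s:ℕ), by omega⟩ : Fin (k+1)) = s from Fin.ext rfl] at this
        refine ⟨SimpleGraph.Walk.cons hadj SimpleGraph.Walk.nil, ?_, ?_⟩
        · simp [SimpleGraph.Walk.isPath_def, hst]
        · apply IC_two; simp
      · -- both nonzero: rim walk
        have hs : 0 < (s:ℕ) := Nat.pos_of_ne_zero (fun h => hs0 (Fin.ext (by simp [h])))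
        have ht : 0 < (t:ℕ) := Nat.pos_of_ne_zero (fun h => ht0 (Fin.ext (by simp [h])))
        have hs' : (s:ℕ) ≤ k := by have := s.isLt; omega
        have ht' : (t:ℕ) ≤ k := by have := t.isLt; omega
        -- key: the mapped rim list between nonzero vertices i ≤ j has increasing chords
        have main : ∀ (i d : ℕ) (hi : 1 ≤ i) (h : i + d ≤ k),
            IncreasingChordsList (((rimWalk k i hi d h).support).map f) := by
          intro i d hi h
          rw [rimWalk_support, List.map_map]
          have : (f ∘ fun m => vtx k (i + m)) = fun m => f (vtx k (i + m)) := rfl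
          rw [this]
          have heq : ∀ m ∈ List.range (d+1),
              f (vtx k (i + m)) = uPt (θ (vtx k (i + m))) := by
            intro m hm
            apply hfu
            rw [List.mem_range] at hm
            rw [vtx_eq k (i+m) (by omega)]
            simp only [Ne, Fin.ext_iff, Fin.val_zero]; omega
          rw [List.map_congr_left heq]
          apply IC_arc (d+1) (fun m => θ (vtx k (i + m)))
          · intro a b hab' hb
            apply hanti <;> (simp only [vtx]; omega)
          · intro a b haN hbN
            apply hsp <;> (simp only [vtx]; omega)
        rcases Nat.lt_or_ge (s:ℕ) (t:ℕ) with hlt | hge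
        · obtain ⟨d, hd⟩ : ∃ d, (s:ℕ) + d = (t:ℕ) := ⟨(t:ℕ) - (s:ℕ), by omega⟩
          have hes : vtx k (s:ℕ) = s := by rw [vtx_eq k _ hs']
          have het : vtx k ((s:ℕ) + d) = t := by
            rw [vtx_eq k _ (by omega)]; exact Fin.ext (by simp [hd])
          refine ⟨(rimWalk k (s:ℕ) hs d (by omega)).copy hes het, ?_, ?_⟩
          · rw [SimpleGraph.Walk.isPath_copy]
            exact rimWalk_isPath k (s:ℕ) hs d (by omega)
          · rw [SimpleGraph.Walk.support_copy]
            exact main (s:ℕ) d hs (by omega)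
        · have hlt : (t:ℕ) < (s:ℕ) := by
            rcases Nat.eq_or_lt_of_le hge with heq | h
            · exact absurd (Fin.ext heq.symm) hst
            · exact h
          obtain ⟨d, hd⟩ : ∃ d, (t:ℕ) + d = (s:ℕ) := ⟨(s:ℕ) - (t:ℕ), by omega⟩
          have het : vtx k (t:ℕ) = t := by rw [vtx_eq k _ ht']
          have hes : vtx k ((t:ℕ) + d) = s := by
            rw [vtx_eq k _ (by omega)]; exact Fin.ext (by simp [hd])
          refine ⟨((rimWalk k (t:ℕ) ht d (by omega)).copy het hes).reverse, ?_, ?_⟩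
          · rw [SimpleGraph.Walk.isPath_reverse_iff, SimpleGraph.Walk.isPath_copy]
            exact rimWalk_isPath k (t:ℕ) ht d (by omega)
          · rw [SimpleGraph.Walk.support_reverse, SimpleGraph.Walk.support_copy,
              List.map_reverse]
            exact IC_reverse (main (t:ℕ) d ht (by omega))

end
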